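/- For every x ∈ H one has Σ φ(x·S(h₍₂₎))·h₍₁₎ = n·x. (Equivalently, the element c₂ = Σ h₍₁₎ ⊗ S(h₍₂₎) of H ⊗ H satisfies the quasi-basis property (id_H ⊗ n⁻¹φ)((1 ⊗ x)·c₂) = x for all x ∈ H.) -/

import Mathlib

open TensorProduct Coalgebra HopfAlgebra

/-- For every `x ∈ H` one has `Σ φ(x·S(h₍₂₎))·h₍₁₎ = n·x`, where `h` is the normalized
two-sided integral of the semisimple cosemisimple Hopf algebra `H` and `φ` the normalized
two-sided integral of its dual. -/
theorem quasi_basis_property_c2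
    {k : Type*} [Field k] {H : Type*} [Ring H] [HopfAlgebra k H]
    [FiniteDimensional k H]
    (n : k) (hn : n = (Module.finrank k H : k)) (hn0 : n ≠ 0)
    (h : H)
    (hInt : ∀ x : H, x * h = counit (R := k) x • h)
    (hInt' : ∀ x : H, h * x = counit (R := k) x • h)
    (hεh : counit (R := k) h = n)
    (φ : H →ₗ[k] k)
    (hφInt : ∀ x : H, TensorProduct.lid k H (LinearMap.rTensor H φ (comul x)) = φ x • 1)
    (hφInt' : ∀ x : H, TensorProduct.rid k H (LinearMap.lTensor H φ (comul x)) = φ x • 1)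
    (hφ1 : φ 1 = n)
    (hSS : ∀ x : H, antipode (R := k) (antipode (R := k) x) = x)
    (hSh : antipode (R := k) h = h)
    (hφS : ∀ x : H, φ (antipode (R := k) x) = φ x)
    (hφh : φ h = n)
    (hφtr : ∀ x y : H, φ (x * y) = φ (y * x)) :
    ∀ x : H,
      TensorProduct.rid k H
        (LinearMap.lTensor H (φ ∘ₗ LinearMap.mulLeft k x ∘ₗ antipode (R := k)) (comul h))
        = n • x := by
  classical
  -- counit collapse lemmas
  have hcl : ∀ (a : H) (r : Repr k a (H × H)),
      ∑ i ∈ r.index, counit (R := k) (r.left i) • r.right i = a := by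
    intro a r
    have h1 := congrArg (TensorProduct.lid k H) (Coalgebra.sum_counit_tmul_eq (R := k) r)
    rw [map_sum] at h1
    simp only [TensorProduct.lid_tmul, one_smul] at h1
    exact h1
  have hcr : ∀ (a : H) (r : Repr k a (H × H)),
      ∑ i ∈ r.index, counit (R := k) (r.right i) • r.left i = a := by
    intro a r
    have h1 := congrArg (TensorProduct.rid k H) (Coalgebra.sum_tmul_counit_eq (R := k) r)
    rw [map_sum] at h1
    simp only [TensorProduct.rid_tmul, one_smul] at h1
    exact h1
  -- dual integral conditions at products
  have hJ : ∀ (y c : H) (ry : Repr k y (H × H)) (rc : Repr k c (H × H)),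
      ∑ j ∈ ry.index, ∑ p ∈ rc.index,
        φ (ry.left j * rc.left p) • (ry.right j * rc.right p) = φ (y * c) • 1 := by
    intro y c ry rc
    have h1 := hφInt (y * c)
    rw [Bialgebra.comul_mul, ← ry.eq, ← rc.eq, Finset.sum_mul_sum] at h1
    simp only [Algebra.TensorProduct.tmul_mul_tmul] at h1
    simpa [map_sum] using h1
  have hJ' : ∀ (c y : H) (rc : Repr k c (H × H)) (ry : Repr k y (H × H)),
      ∑ p ∈ rc.index, ∑ j ∈ ry.index,
        φ (rc.right p * ry.right j) • (rc.left p * ry.left j) = φ (c * y) • 1 := by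
    intro c y rc ry
    have h1 := hφInt' (c * y)
    rw [Bialgebra.comul_mul, ← rc.eq, ← ry.eq, Finset.sum_mul_sum] at h1
    simp only [Algebra.TensorProduct.tmul_mul_tmul] at h1
    simpa [map_sum] using h1
  -- fixed representations of comul h and second-level representations
  have rh : Repr k h (H × H) := ℛ k h
  have rh2 : ∀ i : rh.ι, Repr k (rh.right i) (H × H) := fun i => ℛ k (rh.right i)
  have lh : ∀ i : rh.ι, Repr k (rh.left i) (H × H) := fun i => ℛ k (rh.left i)
  -- nesting swap mapped through suitable linear maps
  have key : ∀ (c d : H),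
      (∑ m ∈ rh.index, ∑ l ∈ (lh m).index,
        φ (c * (lh m).left l) • (d * ((lh m).right l * antipode (R := k) (rh.right m))))
    = ∑ p ∈ rh.index, ∑ q ∈ (rh2 p).index,
        φ (c * rh.left p) • (d * ((rh2 p).left q * antipode (R := k) ((rh2 p).right q))) := by
    intro c d
    have hsw := Coalgebra.sum_tmul_tmul_eq (R := k) rh lh rh2
    have h2 := congrArg (fun t => (LinearMap.mulLeft k d ∘ₗ (TensorProduct.lid k H).toLinearMap ∘ₗ
        LinearMap.rTensor H (φ ∘ₗ LinearMap.mulLeft k c) ∘ₗ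
        LinearMap.lTensor H (LinearMap.mul' k H ∘ₗ LinearMap.lTensor H (antipode (R := k)))) t) hsw
    simpa [map_sum, mul_smul_comm] using h2
  have key' : ∀ (c d : H),
      (∑ m ∈ rh.index, ∑ l ∈ (lh m).index,
        φ (rh.right m * d) • (antipode (R := k) ((lh m).left l) * ((lh m).right l * c)))
    = ∑ p ∈ rh.index, ∑ q ∈ (rh2 p).index,
        φ ((rh2 p).right q * d) • (antipode (R := k) (rh.left p) * ((rh2 p).left q * c)) := by
    intro c d
    have hsw := Coalgebra.sum_tmul_tmul_eq (R := k) rh lh rh2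
    have h2 := congrArg (fun t => (LinearMap.mul' k H ∘ₗ
        TensorProduct.map (antipode (R := k))
          ((TensorProduct.rid k H).toLinearMap ∘ₗ
            TensorProduct.map (LinearMap.mulRight k c) (φ ∘ₗ LinearMap.mulRight k d))) t) hsw
    simpa [map_sum, mul_smul_comm] using h2
  -- (B) : ∑ φ(y h₁) • S(h₂) = n • y
  have hB : ∀ y : H,
      ∑ m ∈ rh.index, φ (y * rh.left m) • antipode (R := k) (rh.right m) = n • y := by
    intro y
    have ry : Repr k y (H × H) := ℛ k y
    calc
      ∑ m ∈ rh.index, φ (y * rh.left m) • antipode (R := k) (rh.right m)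
        = ∑ m ∈ rh.index, ∑ j ∈ ry.index, ∑ l ∈ (lh m).index,
            φ (ry.left j * (lh m).left l) •
              (ry.right j * ((lh m).right l * antipode (R := k) (rh.right m))) := by
          refine Finset.sum_congr rfl fun m _ => ?_
          have hj := hJ y (rh.left m) ry (lh m)
          calc
            φ (y * rh.left m) • antipode (R := k) (rh.right m)
              = (φ (y * rh.left m) • (1 : H)) * antipode (R := k) (rh.right m) := by
                rw [smul_mul_assoc, one_mul]
            _ = (∑ j ∈ ry.index, ∑ l ∈ (lh m).index,
                  φ (ry.left j * (lh m).left l) • (ry.right j * (lh m).right l)) *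
                    antipode (R := k) (rh.right m) := by rw [hj]
            _ = _ := by
                rw [Finset.sum_mul]
                refine Finset.sum_congr rfl fun j _ => ?_
                rw [Finset.sum_mul]
                exact Finset.sum_congr rfl fun l _ => by rw [smul_mul_assoc, mul_assoc]
      _ = ∑ j ∈ ry.index, ∑ m ∈ rh.index, ∑ l ∈ (lh m).index,
            φ (ry.left j * (lh m).left l) •
              (ry.right j * ((lh m).right l * antipode (R := k) (rh.right m))) :=
          Finset.sum_comm
      _ = ∑ j ∈ ry.index, ∑ p ∈ rh.index, ∑ q ∈ (rh2 p).index,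
            φ (ry.left j * rh.left p) •
              (ry.right j * ((rh2 p).left q * antipode (R := k) ((rh2 p).right q))) :=
          Finset.sum_congr rfl fun j _ => key (ry.left j) (ry.right j)
      _ = ∑ j ∈ ry.index, ∑ p ∈ rh.index,
            (φ (ry.left j * rh.left p) * counit (R := k) (rh.right p)) • ry.right j := by
          refine Finset.sum_congr rfl fun j _ => Finset.sum_congr rfl fun p _ => ?_
          rw [← Finset.smul_sum, ← Finset.mul_sum,
            HopfAlgebra.sum_mul_antipode_eq_smul (rh2 p), mul_smul_comm, mul_one, smul_smul]
      _ = ∑ j ∈ ry.index, (counit (R := k) (ry.left j) * n) • ry.right j := by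
          refine Finset.sum_congr rfl fun j _ => ?_
          rw [← Finset.sum_smul]
          congr 1
          calc
            ∑ p ∈ rh.index, φ (ry.left j * rh.left p) * counit (R := k) (rh.right p)
              = φ (ry.left j * ∑ p ∈ rh.index, counit (R := k) (rh.right p) • rh.left p) := by
                rw [Finset.mul_sum, map_sum]
                exact Finset.sum_congr rfl fun p _ => by
                  rw [mul_smul_comm, map_smul, smul_eq_mul, mul_comm]
            _ = φ (ry.left j * h) := by rw [hcr h rh]
            _ = counit (R := k) (ry.left j) * n := by
                rw [hInt (ry.left j), map_smul, hφh, smul_eq_mul]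
      _ = n • ∑ j ∈ ry.index, counit (R := k) (ry.left j) • ry.right j := by
          rw [Finset.smul_sum]
          exact Finset.sum_congr rfl fun j _ => by rw [mul_comm, mul_smul]
      _ = n • y := by rw [hcl y ry]
  -- (B') : ∑ φ(h₂ y) • S(h₁) = n • y
  have hB' : ∀ y : H,
      ∑ p ∈ rh.index, φ (rh.right p * y) • antipode (R := k) (rh.left p) = n • y := by
    intro y
    have ry : Repr k y (H × H) := ℛ k y
    calc
      ∑ p ∈ rh.index, φ (rh.right p * y) • antipode (R := k) (rh.left p)
        = ∑ p ∈ rh.index, ∑ q ∈ (rh2 p).index, ∑ j ∈ ry.index,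
            φ ((rh2 p).right q * ry.right j) •
              (antipode (R := k) (rh.left p) * ((rh2 p).left q * ry.left j)) := by
          refine Finset.sum_congr rfl fun p _ => ?_
          have hj := hJ' (rh.right p) y (rh2 p) ry
          calc
            φ (rh.right p * y) • antipode (R := k) (rh.left p)
              = antipode (R := k) (rh.left p) * (φ (rh.right p * y) • (1 : H)) := by
                rw [mul_smul_comm, mul_one]
            _ = antipode (R := k) (rh.left p) *
                  (∑ q ∈ (rh2 p).index, ∑ j ∈ ry.index,
                    φ ((rh2 p).right q * ry.right j) • ((rh2 p).left q * ry.left j)) := by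
                rw [hj]
            _ = _ := by
                rw [Finset.mul_sum]
                refine Finset.sum_congr rfl fun q _ => ?_
                rw [Finset.mul_sum]
                exact Finset.sum_congr rfl fun j _ => by rw [mul_smul_comm]
      _ = ∑ p ∈ rh.index, ∑ j ∈ ry.index, ∑ q ∈ (rh2 p).index,
            φ ((rh2 p).right q * ry.right j) •
              (antipode (R := k) (rh.left p) * ((rh2 p).left q * ry.left j)) :=
          Finset.sum_congr rfl fun p _ => Finset.sum_comm
      _ = ∑ j ∈ ry.index, ∑ p ∈ rh.index, ∑ q ∈ (rh2 p).index,
            φ ((rh2 p).right q * ry.right j) •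
              (antipode (R := k) (rh.left p) * ((rh2 p).left q * ry.left j)) :=
          Finset.sum_comm
      _ = ∑ j ∈ ry.index, ∑ m ∈ rh.index, ∑ l ∈ (lh m).index,
            φ (rh.right m * ry.right j) •
              (antipode (R := k) ((lh m).left l) * ((lh m).right l * ry.left j)) :=
          Finset.sum_congr rfl fun j _ => (key' (ry.left j) (ry.right j)).symm
      _ = ∑ j ∈ ry.index, ∑ m ∈ rh.index,
            (φ (rh.right m * ry.right j) * counit (R := k) (rh.left m)) • ry.left j := by
          refine Finset.sum_congr rfl fun j _ => Finset.sum_congr rfl fun m _ => ?_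
          rw [← Finset.smul_sum]
          have hin : ∑ l ∈ (lh m).index,
              antipode (R := k) ((lh m).left l) * ((lh m).right l * ry.left j)
              = counit (R := k) (rh.left m) • ry.left j := by
            calc
              ∑ l ∈ (lh m).index,
                  antipode (R := k) ((lh m).left l) * ((lh m).right l * ry.left j)
                = (∑ l ∈ (lh m).index,
                    antipode (R := k) ((lh m).left l) * (lh m).right l) * ry.left j := by
                  rw [Finset.sum_mul]
                  exact Finset.sum_congr rfl fun l _ => by rw [mul_assoc]
              _ = counit (R := k) (rh.left m) • ry.left j := by
                  rw [HopfAlgebra.sum_antipode_mul_eq_smul (lh m), smul_mul_assoc, one_mul]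
          rw [hin, smul_smul]
      _ = ∑ j ∈ ry.index, (counit (R := k) (ry.right j) * n) • ry.left j := by
          refine Finset.sum_congr rfl fun j _ => ?_
          rw [← Finset.sum_smul]
          congr 1
          calc
            ∑ m ∈ rh.index, φ (rh.right m * ry.right j) * counit (R := k) (rh.left m)
              = φ ((∑ m ∈ rh.index, counit (R := k) (rh.left m) • rh.right m) * ry.right j) := by
                rw [Finset.sum_mul, map_sum]
                exact Finset.sum_congr rfl fun m _ => by
                  rw [smul_mul_assoc, map_smul, smul_eq_mul, mul_comm]
            _ = φ (h * ry.right j) := by rw [hcl h rh]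
            _ = counit (R := k) (ry.right j) * n := by
                rw [hInt' (ry.right j), map_smul, hφh, smul_eq_mul]
      _ = n • ∑ j ∈ ry.index, counit (R := k) (ry.right j) • ry.left j := by
          rw [Finset.smul_sum]
          exact Finset.sum_congr rfl fun j _ => by rw [mul_comm, mul_smul]
      _ = n • y := by rw [hcr y ry]
  -- (B'') : traciality variant of (B')
  have hB'' : ∀ y : H,
      ∑ p ∈ rh.index, φ (y * rh.right p) • antipode (R := k) (rh.left p) = n • y := by
    intro y
    rw [← hB' y]
    exact Finset.sum_congr rfl fun p _ => by rw [hφtr]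
  -- final computation
  intro x
  have hgoal : TensorProduct.rid k H
      (LinearMap.lTensor H (φ ∘ₗ LinearMap.mulLeft k x ∘ₗ antipode (R := k)) (comul h))
      = ∑ p ∈ rh.index, φ (x * antipode (R := k) (rh.right p)) • rh.left p := by
    rw [← rh.eq, map_sum, map_sum]
    exact Finset.sum_congr rfl fun p _ => by
      simp [LinearMap.lTensor_tmul, TensorProduct.rid_tmul]
  rw [hgoal]
  apply smul_right_injective H hn0
  show n • _ = n • (n • x)
  calc
    n • ∑ p ∈ rh.index, φ (x * antipode (R := k) (rh.right p)) • rh.left p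
      = ∑ p ∈ rh.index, φ (x * antipode (R := k) (rh.right p)) • (n • rh.left p) := by
        rw [Finset.smul_sum]
        exact Finset.sum_congr rfl fun p _ => smul_comm _ _ _
    _ = ∑ p ∈ rh.index, ∑ m ∈ rh.index,
          (φ (rh.right m * rh.left p) * φ (x * antipode (R := k) (rh.right p))) •
            antipode (R := k) (rh.left m) := by
        refine Finset.sum_congr rfl fun p _ => ?_
        rw [← hB' (rh.left p), Finset.smul_sum]
        exact Finset.sum_congr rfl fun m _ => by rw [smul_smul, mul_comm]
    _ = ∑ m ∈ rh.index, (n * φ (x * rh.right m)) • antipode (R := k) (rh.left m) := by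
        rw [Finset.sum_comm]
        refine Finset.sum_congr rfl fun m _ => ?_
        rw [← Finset.sum_smul]
        congr 1
        calc
          ∑ p ∈ rh.index, φ (rh.right m * rh.left p) * φ (x * antipode (R := k) (rh.right p))
            = φ (x * ∑ p ∈ rh.index,
                φ (rh.right m * rh.left p) • antipode (R := k) (rh.right p)) := by
              rw [Finset.mul_sum, map_sum]
              exact Finset.sum_congr rfl fun p _ => by
                rw [mul_smul_comm, map_smul, smul_eq_mul]
          _ = φ (x * (n • rh.right m)) := by rw [hB (rh.right m)]
          _ = n * φ (x * rh.right m) := by rw [mul_smul_comm, map_smul, smul_eq_mul]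
    _ = n • (n • x) := by
        rw [← hB'' x, Finset.smul_sum]
        exact Finset.sum_congr rfl fun m _ => by rw [mul_smul]
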